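/- If X is a compact subset of ℝ^n and T : X → ℝ^m is continuous and injective, then T is uniformly injective: there exists a class-K∞ function α such that |x₁ − x₂| ≤ α(|T(x₁) − T(x₂)|) for all x₁, x₂ ∈ X. -/

import Mathlib

def IsKInfty (α : ℝ → ℝ) : Prop :=
  ContinuousOn α (Set.Ici 0) ∧ StrictMonoOn α (Set.Ici 0) ∧ α 0 = 0 ∧
    Filter.Tendsto α Filter.atTop Filter.atTop

/-- a continuous injective map on a compact set is uniformly injective. -/
theorem stmt2 {n m : ℕ} (X : Set (EuclideanSpace ℝ (Fin n)))
    (hX : IsCompact X)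
    (T : EuclideanSpace ℝ (Fin n) → EuclideanSpace ℝ (Fin m))
    (hT : ContinuousOn T X) (hinj : Set.InjOn T X) :
    ∃ α : ℝ → ℝ, IsKInfty α ∧
      ∀ x₁ ∈ X, ∀ x₂ ∈ X, ‖x₁ - x₂‖ ≤ α ‖T x₁ - T x₂‖ := by
  classical
  -- a bound on the diameter
  obtain ⟨C, hC0, hC⟩ : ∃ C : ℝ, 0 < C ∧ ∀ x ∈ X, ∀ y ∈ X, ‖x - y‖ ≤ C := by
    refine ⟨Metric.diam X + 1, by positivity, fun x hx y hy => ?_⟩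
    have : dist x y ≤ Metric.diam X := Metric.dist_le_diam_of_mem hX.isBounded hx hy
    rw [dist_eq_norm] at this; linarith
  -- uniform injectivity at each scale
  have key : ∀ ε : ℝ, 0 < ε → ∃ δ : ℝ, 0 < δ ∧
      ∀ x ∈ X, ∀ y ∈ X, ‖T x - T y‖ < δ → ‖x - y‖ ≤ ε := by
    intro ε hε
    set K : Set (EuclideanSpace ℝ (Fin n) × EuclideanSpace ℝ (Fin n)) := {p | p.1 ∈ X ∧ p.2 ∈ X ∧ ε ≤ ‖p.1 - p.2‖} with hK
    have hKc : IsCompact K := by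
      have hKeq : K = (X ×ˢ X) ∩ {p : EuclideanSpace ℝ (Fin n) × EuclideanSpace ℝ (Fin n) | ε ≤ ‖p.1 - p.2‖} := by
        ext p; simp [hK, Set.mem_prod, and_assoc]
      rw [hKeq]
      exact (hX.prod hX).inter_right
        (isClosed_le continuous_const ((continuous_fst.sub continuous_snd).norm))
    rcases K.eq_empty_or_nonempty with hKe | hKne
    · refine ⟨1, one_pos, fun x hx y hy _ => ?_⟩
      by_contra hxy
      push_neg at hxy
      have : (x, y) ∈ K := ⟨hx, hy, hxy.le⟩
      simp [hKe] at this
    · have hg : ContinuousOn (fun p : EuclideanSpace ℝ (Fin n) × EuclideanSpace ℝ (Fin n) => ‖T p.1 - T p.2‖) K := by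
        apply ContinuousOn.norm
        exact (hT.comp continuous_fst.continuousOn (fun p hp => hp.1)).sub
          (hT.comp continuous_snd.continuousOn (fun p hp => hp.2.1))
      obtain ⟨p₀, hp₀K, hp₀min⟩ := hKc.exists_isMinOn hKne hg
      refine ⟨‖T p₀.1 - T p₀.2‖, ?_, ?_⟩
      · rcases (norm_nonneg (T p₀.1 - T p₀.2)).lt_or_eq with h | h
        · exact h
        · exfalso
          have hTeq : T p₀.1 = T p₀.2 := by
            have := h.symm
            rwa [norm_eq_zero, sub_eq_zero] at this
          have := hinj hp₀K.1 hp₀K.2.1 hTeq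
          have h2 := hp₀K.2.2
          rw [this, sub_self, norm_zero] at h2
          linarith
      · intro x hx y hy hlt
        by_contra hxy
        push_neg at hxy
        have hmem : (x, y) ∈ K := ⟨hx, hy, hxy.le⟩
        have := hp₀min hmem
        simp only [Set.mem_setOf_eq] at this
        exact absurd (lt_of_le_of_lt this hlt) (lt_irrefl _)
  -- choose δ's
  choose h hh using fun k : ℕ => key (C * (1/2)^k) (by positivity)
  set d : ℕ → ℝ := fun k => (Finset.range (k+1)).inf' ⟨0, by simp⟩ h with hd
  have hd_le : ∀ j k : ℕ, j ≤ k → d k ≤ h j := by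
    intro j k hjk
    exact Finset.inf'_le _ (Finset.mem_range.mpr (Nat.lt_succ_of_le hjk))
  have hd_pos : ∀ k, 0 < d k := by
    intro k
    rw [hd]
    refine (Finset.lt_inf'_iff ..).mpr ?_
    exact fun j _ => (hh j).1
  have hd_anti : ∀ j k : ℕ, j ≤ k → d k ≤ d j := by
    intro j k hjk
    obtain ⟨i, hi, hieq⟩ := Finset.exists_mem_eq_inf'
      (⟨0, by simp⟩ : (Finset.range (j+1)).Nonempty) h
    rw [hd]
    simp only
    rw [hieq]
    exact Finset.inf'_le _ (Finset.mem_range.mpr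
      (lt_of_lt_of_le (Finset.mem_range.mp hi) (by omega)))
  have hd_prop : ∀ k : ℕ, ∀ x ∈ X, ∀ y ∈ X, ‖T x - T y‖ < d k → ‖x - y‖ ≤ C * (1/2)^k := by
    intro k x hx y hy hlt
    exact (hh k).2 x hx y hy (lt_of_lt_of_le hlt (hd_le k k le_rfl))
  -- the summands
  set u : ℕ → ℝ := fun j => 2 * C * (1/2)^j with hu
  set term : ℕ → ℝ → ℝ := fun j r => u j * min 1 (max r 0 / d j) with hterm
  have hu_pos : ∀ j, 0 ≤ u j := fun j => by rw [hu]; positivity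
  have hterm_nonneg : ∀ j r, 0 ≤ term j r := by
    intro j r
    exact mul_nonneg (hu_pos j)
      (le_min zero_le_one (div_nonneg (le_max_right r 0) (hd_pos j).le))
  have hterm_le : ∀ j r, term j r ≤ u j := by
    intro j r
    calc term j r ≤ u j * 1 := mul_le_mul_of_nonneg_left (min_le_left _ _) (hu_pos j)
    _ = u j := mul_one _
  have hu_sum : Summable u := by
    have : Summable (fun j : ℕ => (1/2 : ℝ)^j) :=
      summable_geometric_of_lt_one (by norm_num) (by norm_num)
    exact this.mul_left (2 * C)
  have hterm_sum : ∀ r, Summable (fun j => term j r) :=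
    fun r => Summable.of_nonneg_of_le (fun j => hterm_nonneg j r) (fun j => hterm_le j r) hu_sum
  have hterm_mono : ∀ j, Monotone (fun r => term j r) := by
    intro j a b hab
    apply mul_le_mul_of_nonneg_left _ (hu_pos j)
    apply min_le_min le_rfl
    apply div_le_div_of_nonneg_right ?_ (hd_pos j).le
    exact max_le_max hab le_rfl
  have hS_cont : Continuous (fun r : ℝ => ∑' j, term j r) := by
    refine continuous_tsum (fun j => ?_) hu_sum (fun j r => ?_)
    · exact continuous_const.mul
        (continuous_const.min ((continuous_id.max continuous_const).div_const _))
    · rw [Real.norm_eq_abs, abs_of_nonneg (hterm_nonneg j r)]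
      exact hterm_le j r
  have hS_mono : Monotone (fun r => ∑' j, term j r) := fun a b hab =>
    Summable.tsum_le_tsum (fun j => hterm_mono j hab) (hterm_sum a) (hterm_sum b)
  have hS_nonneg : ∀ r, 0 ≤ ∑' j, term j r := fun r => tsum_nonneg (fun j => hterm_nonneg j r)
  have hS0 : (∑' j, term j 0) = 0 := by
    have h0 : ∀ j, term j 0 = 0 := by
      intro j
      rw [hterm]
      norm_num
    simp [h0]
  refine ⟨fun r => r + ∑' j, term j r, ⟨?_, ?_, ?_, ?_⟩, ?_⟩
  · exact (continuous_id.add hS_cont).continuousOn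
  · intro a _ b _ hab
    have := hS_mono hab.le
    simp only
    linarith
  · simp [hS0]
  · refine Filter.tendsto_atTop_mono (fun r => ?_) Filter.tendsto_id
    exact le_add_of_nonneg_right (hS_nonneg r)
  · intro x₁ hx₁ x₂ hx₂
    show ‖x₁ - x₂‖ ≤ ‖T x₁ - T x₂‖ + ∑' j, term j ‖T x₁ - T x₂‖
    set s := ‖T x₁ - T x₂‖ with hs
    have hs0 : 0 ≤ s := norm_nonneg _
    by_cases hcase : ∃ j, d j ≤ s
    · have hdk : d (Nat.find hcase) ≤ s := Nat.find_spec hcase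
      have h1 : ‖x₁ - x₂‖ ≤ u (Nat.find hcase) := by
        rcases Nat.eq_zero_or_pos (Nat.find hcase) with h0 | hpos
        · have hb := hC x₁ hx₁ x₂ hx₂
          rw [h0, hu]
          simp only [pow_zero, mul_one]
          linarith
        · have hlt : s < d (Nat.find hcase - 1) := by
            have hm := Nat.find_min hcase (Nat.sub_lt hpos one_pos)
            exact lt_of_not_ge hm
          have hbd := hd_prop _ x₁ hx₁ x₂ hx₂ hlt
          have heq : u (Nat.find hcase) = C * (1/2)^(Nat.find hcase - 1) := by
            rw [hu]
            obtain ⟨p, hp⟩ := Nat.exists_eq_succ_of_ne_zero (Nat.pos_iff_ne_zero.mp hpos)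
            rw [hp]
            simp [pow_succ]
            ring
          rw [heq]
          exact hbd
      have h2 : term (Nat.find hcase) s = u (Nat.find hcase) := by
        rw [hterm]
        simp only
        rw [max_eq_left hs0, min_eq_left ((one_le_div (hd_pos _)).mpr hdk), mul_one]
      have h3 : term (Nat.find hcase) s ≤ ∑' j, term j s :=
        Summable.le_tsum (hterm_sum s) _ (fun j _ => hterm_nonneg j s)
      calc ‖x₁ - x₂‖ ≤ u (Nat.find hcase) := h1
      _ = term (Nat.find hcase) s := h2.symm
      _ ≤ ∑' j, term j s := h3
      _ ≤ s + ∑' j, term j s := le_add_of_nonneg_left hs0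
    · push_neg at hcase
      have hle : ∀ j, ‖x₁ - x₂‖ ≤ C * (1/2)^j :=
        fun j => hd_prop j x₁ hx₁ x₂ hx₂ (hcase j)
      have h0 : ‖x₁ - x₂‖ ≤ 0 := by
        have htend : Filter.Tendsto (fun j : ℕ => C * (1/2)^j) Filter.atTop (nhds 0) := by
          have := (tendsto_pow_atTop_nhds_zero_of_lt_one
            (by norm_num : (0:ℝ) ≤ 1/2) (by norm_num : (1/2 : ℝ) < 1)).const_mul C
          simpa using this
        exact ge_of_tendsto' htend hle
      exact le_trans h0 (add_nonneg hs0 (hS_nonneg s))
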